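/- arXiv:1406.3295 — 6 statements merged into one kernel-verified Lean document; each statement's English description precedes it below -/
import Mathlib

section
/- Let X be an I_1×I_2 real matrix of rank at most R, and let Φ_1 (R×I_1) and Φ_2 (R×I_2) be matrices such that W = Φ_1 X Φ_2^T is invertible. Then X = Z_1 W^† Z_2^T, where Z_1 = X Φ_2^T, Z_2 = (Φ_1 X)^T, and W^† denotes the Moore–Penrose pseudo-inverse (here W^{-1}). -/
open Matrix

/-- exact recovery of a rank-≤R matrix from its two-mode compressive measurements
Z₁ = XΦ₂ᵀ, Z₂ = (Φ₁X)ᵀ and invertible core W = Φ₁XΦ₂ᵀ. -/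
theorem exact_matrix_recovery (I1 I2 R : ℕ)
    (X : Matrix (Fin I1) (Fin I2) ℝ) (hrank : X.rank ≤ R)
    (Φ1 : Matrix (Fin R) (Fin I1) ℝ) (Φ2 : Matrix (Fin R) (Fin I2) ℝ)
    (W : Matrix (Fin R) (Fin R) ℝ) (hWdef : W = Φ1 * X * Φ2ᵀ)
    (hW : IsUnit W.det)
    (Z1 : Matrix (Fin I1) (Fin R) ℝ) (hZ1 : Z1 = X * Φ2ᵀ)
    (Z2 : Matrix (Fin I2) (Fin R) ℝ) (hZ2 : Z2 = (Φ1 * X)ᵀ) :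
    X = Z1 * W⁻¹ * Z2ᵀ := by
  have hWrank : W.rank = R := by
    rw [Matrix.rank_of_isUnit W ((Matrix.isUnit_iff_isUnit_det W).2 hW)]
    simp
  have hW1 : W = Φ1 * Z1 := by rw [hZ1, hWdef, Matrix.mul_assoc]
  have hZ1rank : Z1.rank = R := by
    have h1 : W.rank ≤ Z1.rank := hW1 ▸ Matrix.rank_mul_le_right Φ1 Z1
    have h2 : Z1.rank ≤ X.rank := hZ1 ▸ Matrix.rank_mul_le_left X Φ2ᵀ
    omega
  have hXrank : X.rank = R := by
    have h1 : W.rank ≤ X.rank := by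
      calc W.rank ≤ Z1.rank := hW1 ▸ Matrix.rank_mul_le_right Φ1 Z1
        _ ≤ X.rank := hZ1 ▸ Matrix.rank_mul_le_left X Φ2ᵀ
    omega
  -- range of Z1 equals range of X
  have hle : LinearMap.range Z1.mulVecLin ≤ LinearMap.range X.mulVecLin := by
    rw [hZ1, Matrix.mulVecLin_mul]
    exact LinearMap.range_comp_le_range _ _
  have hrangeeq : LinearMap.range Z1.mulVecLin = LinearMap.range X.mulVecLin := by
    apply Submodule.eq_of_le_of_finrank_le hle
    show X.rank ≤ Z1.rank
    omega
  ext i j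
  have hcol : X.mulVec (Pi.single j 1) ∈ LinearMap.range Z1.mulVecLin := by
    rw [hrangeeq]; exact ⟨Pi.single j 1, rfl⟩
  obtain ⟨u, hu⟩ := hcol
  have hu' : Z1.mulVec u = X.mulVec (Pi.single j 1) := hu
  have key : (Z1 * W⁻¹ * Z2ᵀ).mulVec (Pi.single j 1) = X.mulVec (Pi.single j 1) := by
    have : Z2ᵀ = Φ1 * X := by rw [hZ2, Matrix.transpose_transpose]
    have hPhi : Φ1 *ᵥ (Z1 *ᵥ u) = W *ᵥ u := by
      rw [Matrix.mulVec_mulVec, ← hW1]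
    have hWinv : W⁻¹ *ᵥ (W *ᵥ u) = u := by
      rw [Matrix.mulVec_mulVec, Matrix.nonsing_inv_mul W hW, Matrix.one_mulVec]
    rw [this, ← Matrix.mulVec_mulVec, ← Matrix.mulVec_mulVec, ← Matrix.mulVec_mulVec,
      ← hu', hPhi, hWinv, hu']
  have := congrFun key i
  simpa [Matrix.mulVec_single_one] using this.symm
end

section
/- Let X be an I_1×I_2 real matrix of rank R with truncated SVD X = U_1 Λ_1 V_1^T (U_1, V_1 having R orthonormal columns, Λ_1 an invertible diagonal R×R matrix). If the sensing matrices are chosen as Φ_1 = U_1^T and Φ_2 = V_1^T, then the reconstruction X̂ = (X Φ_2^T)(Φ_1 X Φ_2^T)^†(Φ_1 X)^T equals X exactly. -/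
open Matrix

/-- choosing the sensing matrices from the singular vectors of a rank-R matrix X,
the reconstruction X̂ = (XΦ₂ᵀ)(Φ₁XΦ₂ᵀ)†(Φ₁X) recovers X exactly.  The Moore–Penrose
pseudo-inverse P of W is characterized by the four Penrose conditions. -/
theorem optimal_sensing_exact_recovery (I1 I2 R : ℕ)
    (X : Matrix (Fin I1) (Fin I2) ℝ) (hrank : X.rank = R)
    (U1 : Matrix (Fin I1) (Fin R) ℝ) (V1 : Matrix (Fin I2) (Fin R) ℝ)
    (Λ1 : Matrix (Fin R) (Fin R) ℝ)
    (hU : U1ᵀ * U1 = 1) (hV : V1ᵀ * V1 = 1)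
    (hdiag : Λ1.IsDiag) (hΛ : IsUnit Λ1.det)
    (hX : X = U1 * Λ1 * V1ᵀ)
    (Φ1 : Matrix (Fin R) (Fin I1) ℝ) (Φ2 : Matrix (Fin R) (Fin I2) ℝ)
    (hΦ1 : Φ1 = U1ᵀ) (hΦ2 : Φ2 = V1ᵀ)
    (W : Matrix (Fin R) (Fin R) ℝ) (hW : W = Φ1 * X * Φ2ᵀ)
    (P : Matrix (Fin R) (Fin R) ℝ)
    (hP1 : W * P * W = W) (hP2 : P * W * P = P)
    (hP3 : (W * P)ᵀ = W * P) (hP4 : (P * W)ᵀ = P * W) :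
    (X * Φ2ᵀ) * P * (Φ1 * X) = X := by
  subst hX hΦ1 hΦ2 hW
  rw [transpose_transpose] at hP1 ⊢
  have hWeq : U1ᵀ * (U1 * Λ1 * V1ᵀ) * V1 = Λ1 := by
    calc U1ᵀ * (U1 * Λ1 * V1ᵀ) * V1 = (U1ᵀ * U1) * Λ1 * (V1ᵀ * V1) := by
          simp only [Matrix.mul_assoc]
      _ = Λ1 := by rw [hU, hV, Matrix.one_mul, Matrix.mul_one]
  rw [hWeq] at hP1
  have hP : P = Λ1⁻¹ := by
    have h1 : Λ1⁻¹ * (Λ1 * P * Λ1) * Λ1⁻¹ = Λ1⁻¹ * Λ1 * Λ1⁻¹ := by rw [hP1]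
    rw [Matrix.nonsing_inv_mul _ hΛ, Matrix.one_mul] at h1
    calc P = (Λ1⁻¹ * Λ1) * P * (Λ1 * Λ1⁻¹) := by
          rw [Matrix.nonsing_inv_mul _ hΛ, Matrix.mul_nonsing_inv _ hΛ,
            Matrix.one_mul, Matrix.mul_one]
      _ = Λ1⁻¹ * (Λ1 * P * Λ1) * Λ1⁻¹ := by simp only [Matrix.mul_assoc]
      _ = Λ1⁻¹ := h1
  rw [hP]
  calc U1 * Λ1 * V1ᵀ * V1 * Λ1⁻¹ * (U1ᵀ * (U1 * Λ1 * V1ᵀ))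
      = U1 * (Λ1 * ((V1ᵀ * V1) * (Λ1⁻¹ * ((U1ᵀ * U1) * (Λ1 * V1ᵀ))))) := by
        simp only [Matrix.mul_assoc]
    _ = U1 * (Λ1 * (Λ1⁻¹ * (Λ1 * V1ᵀ))) := by
        rw [hU, hV, Matrix.one_mul, Matrix.one_mul]
    _ = U1 * Λ1 * V1ᵀ := by
        rw [← Matrix.mul_assoc Λ1⁻¹, Matrix.nonsing_inv_mul _ hΛ, Matrix.one_mul,
          ← Matrix.mul_assoc]
end

section
/- Let X ∈ R^{I×I}, sensing matrices Φ_1, Φ_2 ∈ R^{R×I} partitioned as Φ_1 = (Φ_{1,1}, Φ_{1,2}), Φ_2 = (Φ_{2,1}, Φ_{2,2}) with Φ_{1,2}, Φ_{2,2} ∈ R^{R×R} and Φ_{1,2} invertible. Define Z_1 = XΦ_2^T with block form Z_1^T = (Z_{1,1}, Z_{1,2}), Z_{1,1} ∈ R^{R×(I−R)}, Z_{1,2} ∈ R^{R×R}, and Z_2 = X^TΦ_1^T. Then Z_{1,2} = (Φ_2 Z_2 − Z_{1,1} Φ_{1,1}^T)(Φ_{1,2}^{-1})^T. -/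
open Matrix

/-- redundancy of the measurements — the last R columns of Z₁ᵀ can be computed
from Z₂ and the first I−R columns of Z₁ᵀ via Z₁₂ = (Φ₂Z₂ − Z₁₁Φ₁₁ᵀ)(Φ₁₂⁻¹)ᵀ. -/
theorem measurement_redundancy (m R : ℕ)
    (X : Matrix (Fin m ⊕ Fin R) (Fin m ⊕ Fin R) ℝ)
    (Φ11 Φ21 : Matrix (Fin R) (Fin m) ℝ) (Φ12 Φ22 : Matrix (Fin R) (Fin R) ℝ)
    (hΦ12 : IsUnit Φ12.det)
    (Φ1 Φ2 : Matrix (Fin R) (Fin m ⊕ Fin R) ℝ)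
    (hΦ1 : Φ1 = Matrix.fromCols Φ11 Φ12) (hΦ2 : Φ2 = Matrix.fromCols Φ21 Φ22)
    (Z1 : Matrix (Fin m ⊕ Fin R) (Fin R) ℝ) (hZ1 : Z1 = X * Φ2ᵀ)
    (Z2 : Matrix (Fin m ⊕ Fin R) (Fin R) ℝ) (hZ2 : Z2 = Xᵀ * Φ1ᵀ)
    (Z11 : Matrix (Fin R) (Fin m) ℝ) (Z12 : Matrix (Fin R) (Fin R) ℝ)
    (hblocks : Z1ᵀ = Matrix.fromCols Z11 Z12) :
    Z12 = (Φ2 * Z2 - Z11 * Φ11ᵀ) * (Φ12⁻¹)ᵀ := by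
  have hXT : Φ2 * Xᵀ = Z1ᵀ := by rw [hZ1, transpose_mul, transpose_transpose]
  have h1 : Φ2 * Z2 = Z11 * Φ11ᵀ + Z12 * Φ12ᵀ := by
    rw [hZ2, ← Matrix.mul_assoc, hXT, hblocks, hΦ1, transpose_fromCols,
      fromCols_mul_fromRows]
  have hdet : IsUnit (Φ12ᵀ).det := by rwa [det_transpose]
  rw [h1, transpose_nonsing_inv, add_sub_cancel_left,
    Matrix.mul_nonsing_inv_cancel_right _ _ hdet]
end

section
/- Let W ∈ R^{R_1×R_2×R_3} be a 3rd-order tensor with mode-n unfoldings W_{(n)} and smallest positive singular values σ_{R_1}, σ_{R_2}, σ_{R_3}. If τ > max(σ_{R_1}, σ_{R_2}, σ_{R_3}), then W ×_1 (W_{(1)} W_{(1)}^{*τ}) ×_2 (W_{(2)} W_{(2)}^{*τ}) ×_3 (W_{(3)} W_{(3)}^{*τ}) = W + H with Frobenius norm ‖H‖_F ≤ (√R_1 + √R_2 + √R_3) τ. -/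
open Matrix

namespace L1Aux

noncomputable def frobSq {m n : Type*} [Fintype m] [Fintype n] (M : Matrix m n ℝ) : ℝ :=
  ∑ i, ∑ j, (M i j)^2

lemma frobSq_nonneg {m n : Type*} [Fintype m] [Fintype n] (M : Matrix m n ℝ) : 0 ≤ frobSq M :=
  Finset.sum_nonneg fun _ _ => Finset.sum_nonneg fun _ _ => sq_nonneg _

lemma frobSq_eq_trace {m n : Type*} [Fintype m] [Fintype n] (M : Matrix m n ℝ) :
    frobSq M = Matrix.trace (Mᵀ * M) := by
  simp only [frobSq, Matrix.trace, Matrix.diag, Matrix.mul_apply, Matrix.transpose_apply, sq]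
  exact Finset.sum_comm

lemma frobSq_transpose {m n : Type*} [Fintype m] [Fintype n] (M : Matrix m n ℝ) :
    frobSq Mᵀ = frobSq M := by
  simp only [frobSq, Matrix.transpose_apply]
  exact Finset.sum_comm

lemma frobSq_mul_left_orth {m n : Type*} [Fintype m] [Fintype n] [DecidableEq m]
    (U : Matrix m m ℝ) (hU : Uᵀ * U = 1) (M : Matrix m n ℝ) :
    frobSq (U * M) = frobSq M := by
  rw [frobSq_eq_trace, frobSq_eq_trace, Matrix.transpose_mul, Matrix.mul_assoc,
    ← Matrix.mul_assoc Uᵀ, hU, Matrix.one_mul]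


lemma frobSq_mul_right_orth {m n : Type*} [Fintype m] [Fintype n] [DecidableEq n]
    (V : Matrix n n ℝ) (hV : Vᵀ * V = 1) (M : Matrix m n ℝ) :
    frobSq (M * Vᵀ) = frobSq M := by
  rw [← frobSq_transpose (M * Vᵀ), Matrix.transpose_mul, Matrix.transpose_transpose,
    frobSq_mul_left_orth V hV, frobSq_transpose]

/-- row scaling by factors of absolute value ≤ 1 is nonexpansive -/
lemma frobSq_row_scale_le {m n : Type*} [Fintype m] [Fintype n]
    (d : m → ℝ) (hd : ∀ i, |d i| ≤ 1) (M N : Matrix m n ℝ)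
    (h : ∀ i j, N i j = d i * M i j) :
    frobSq N ≤ frobSq M := by
  refine Finset.sum_le_sum fun i _ => Finset.sum_le_sum fun j _ => ?_
  rw [h, mul_pow]
  calc d i ^ 2 * M i j ^ 2 ≤ 1 * M i j ^ 2 := by
        apply mul_le_mul_of_nonneg_right _ (sq_nonneg _)
        calc d i ^ 2 = |d i| ^ 2 := (sq_abs _).symm
        _ ≤ 1 ^ 2 := by apply pow_le_pow_left₀ (abs_nonneg _) (hd i)
        _ = 1 := one_pow 2
  _ = M i j ^ 2 := one_mul _

lemma sqrt_sum_sq_add_le {ι : Type*} [Fintype ι] (f g : ι → ℝ) :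
    Real.sqrt (∑ x, (f x + g x)^2) ≤ Real.sqrt (∑ x, (f x)^2) + Real.sqrt (∑ x, (g x)^2) := by
  have key : ∀ h : EuclideanSpace ℝ ι, ‖h‖ = Real.sqrt (∑ x, (h x)^2) := by
    intro h
    rw [EuclideanSpace.norm_eq]
    congr 1
    refine Finset.sum_congr rfl fun x _ => ?_
    rw [Real.norm_eq_abs, sq_abs]
  have h1 := norm_add_le ((WithLp.equiv 2 (ι → ℝ)).symm f) ((WithLp.equiv 2 (ι → ℝ)).symm g)
  rw [key, key, key] at h1
  simpa using h1


lemma sum_ite_coe_le {p : ℕ} (i : ℕ) (c : ℝ) (hc : 0 ≤ c) :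
    ∑ j : Fin p, (if i = (j : ℕ) then c else 0) ≤ c := by
  by_cases h : i < p
  · rw [Finset.sum_eq_single (⟨i, h⟩ : Fin p)]
    · simp
    · intro j _ hj
      rw [if_neg]
      intro hij
      exact hj (by ext; exact hij.symm)
    · simp
  · rw [Finset.sum_eq_zero]
    · exact hc
    · intro j _
      rw [if_neg]
      intro hij
      exact h (hij ▸ j.isLt)

lemma key {n p : ℕ} (τ : ℝ) (hτ0 : 0 ≤ τ)
    (U : Matrix (Fin n) (Fin n) ℝ) (V : Matrix (Fin p) (Fin p) ℝ)
    (hU : Uᵀ * U = 1) (hV : Vᵀ * V = 1)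
    (σ : ℕ → ℝ) (hσ : ∀ i, 0 ≤ σ i)
    (Wm : Matrix (Fin n) (Fin p) ℝ)
    (hsvd : Wm = U * Matrix.of (fun (i : Fin n) (j : Fin p) =>
      if (i : ℕ) = (j : ℕ) then σ (i : ℕ) else 0) * Vᵀ)
    (P : Matrix (Fin p) (Fin n) ℝ)
    (hP : P = V * Matrix.of (fun (j : Fin p) (i : Fin n) =>
      if (j : ℕ) = (i : ℕ) ∧ τ < σ (i : ℕ) then (σ (i : ℕ))⁻¹ else 0) * Uᵀ) :
    (∀ (q : Type) [Fintype q] (M : Matrix (Fin n) q ℝ), frobSq (Wm * P * M) ≤ frobSq M) ∧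
    frobSq (Wm * P * Wm - Wm) ≤ (n : ℝ) * τ^2 := by
  set Sm : Matrix (Fin n) (Fin p) ℝ := Matrix.of (fun (i : Fin n) (j : Fin p) =>
      if (i : ℕ) = (j : ℕ) then σ (i : ℕ) else 0) with hSm
  set Tm : Matrix (Fin p) (Fin n) ℝ := Matrix.of (fun (j : Fin p) (i : Fin n) =>
      if (j : ℕ) = (i : ℕ) ∧ τ < σ (i : ℕ) then (σ (i : ℕ))⁻¹ else 0) with hTm
  set d : Fin n → ℝ := fun i => if τ < σ (i : ℕ) ∧ (i : ℕ) < p then 1 else 0 with hd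
  set E : Matrix (Fin n) (Fin n) ℝ := Matrix.of (fun i i' : Fin n =>
      if i = i' then d i else 0) with hE
  have hdle : ∀ i, |d i| ≤ 1 := by
    intro i
    by_cases h : τ < σ (i : ℕ) ∧ (i : ℕ) < p <;> simp [hd, h]
  have hST : Sm * Tm = E := by
    ext i i'
    rw [Matrix.mul_apply]
    simp only [hSm, hTm, hE, Matrix.of_apply]
    by_cases hip : (i : ℕ) < p
    · rw [Finset.sum_eq_single (⟨(i : ℕ), hip⟩ : Fin p)]
      · simp only []
        by_cases hii : (i : ℕ) = (i' : ℕ)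
        · have hii' : i = i' := Fin.ext hii
          subst hii'
          by_cases hτσ : τ < σ (i : ℕ)
          · have hσpos : σ (i : ℕ) ≠ 0 := ne_of_gt (lt_of_le_of_lt hτ0 hτσ)
            simp [hd, hτσ, hip, mul_inv_cancel₀ hσpos]
          · simp [hd, hτσ]
        · have hne : i ≠ i' := fun h => hii (by rw [h])
          simp [hii, hne]
      · intro j _ hj
        rw [if_neg, zero_mul]
        intro hij
        exact hj (by ext; exact hij.symm)
      · simp
    · rw [Finset.sum_eq_zero]
      · by_cases hii : i = i'
        · subst hii
          rw [if_pos rfl]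
          simp only [hd]
          rw [if_neg (fun h => hip h.2)]
        · rw [if_neg hii]
      · intro j _
        rw [if_neg, zero_mul]
        intro hij
        exact hip (hij ▸ j.isLt)
  have hQ : Wm * P = U * E * Uᵀ := by
    rw [hsvd, hP]
    have h1 : U * Sm * Vᵀ * (V * Tm * Uᵀ) = U * (Sm * (Vᵀ * V) * Tm) * Uᵀ := by
      simp only [Matrix.mul_assoc]
    rw [h1, hV, Matrix.mul_one, hST]
  have hUUT : Uᵀᵀ * Uᵀ = 1 := by
    rw [Matrix.transpose_transpose]
    exact mul_eq_one_comm.mp hU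
  have hEmul : ∀ (q : Type) [Fintype q] (N : Matrix (Fin n) q ℝ) (i : Fin n) (j : q),
      (E * N) i j = d i * N i j := by
    intro q _ N i j
    rw [Matrix.mul_apply]
    simp only [hE, Matrix.of_apply, ite_mul, zero_mul]
    rw [Finset.sum_ite_eq]
    simp
  constructor
  · intro q _ M
    have h1 : Wm * P * M = U * (E * (Uᵀ * M)) := by
      rw [hQ]; simp only [Matrix.mul_assoc]
    rw [h1, frobSq_mul_left_orth U hU]
    calc frobSq (E * (Uᵀ * M)) ≤ frobSq (Uᵀ * M) :=
          frobSq_row_scale_le d hdle _ _ (fun i j => hEmul _ _ i j)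
    _ = frobSq M := frobSq_mul_left_orth Uᵀ hUUT M
  · have h2 : Wm * P * Wm - Wm = U * (E * Sm - Sm) * Vᵀ := by
      rw [hQ]
      conv_lhs => rw [hsvd]
      rw [Matrix.mul_sub, Matrix.sub_mul]
      congr 1
      calc U * E * Uᵀ * (U * Sm * Vᵀ) = U * (E * ((Uᵀ * U) * (Sm * Vᵀ))) := by
            simp only [Matrix.mul_assoc]
      _ = U * (E * Sm) * Vᵀ := by rw [hU, Matrix.one_mul]; simp only [Matrix.mul_assoc]
    rw [h2, frobSq_mul_right_orth V hV, frobSq_mul_left_orth U hU]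
    have hbound : ∀ (i : Fin n) (j : Fin p),
        ((E * Sm - Sm) i j)^2 ≤ if (i : ℕ) = (j : ℕ) then τ^2 else 0 := by
      intro i j
      rw [Matrix.sub_apply, hEmul]
      by_cases hij : (i : ℕ) = (j : ℕ)
      · simp only [hij, if_pos, hSm, Matrix.of_apply, if_pos hij]
        have hip : (i : ℕ) < p := hij ▸ j.isLt
        by_cases hτσ : τ < σ (i : ℕ)
        · have h1 : d i = 1 := by simp [hd, hτσ, hip]
          rw [h1, one_mul, sub_self]
          simpa using sq_nonneg τ
        · have h0 : d i = 0 := by simp [hd, hτσ]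
          rw [h0, zero_mul, zero_sub, neg_sq]
          exact hij ▸ pow_le_pow_left₀ (hσ _) (not_lt.mp hτσ) 2
      · simp [hSm, hij]
    calc frobSq (E * Sm - Sm)
        ≤ ∑ i : Fin n, ∑ j : Fin p, (if (i : ℕ) = (j : ℕ) then τ^2 else 0) :=
          Finset.sum_le_sum fun i _ => Finset.sum_le_sum fun j _ => hbound i j
    _ ≤ ∑ _i : Fin n, τ^2 :=
          Finset.sum_le_sum fun i _ => sum_ite_coe_le _ _ (sq_nonneg τ)
    _ = (n : ℝ) * τ^2 := by
          rw [Finset.sum_const, Finset.card_univ, Fintype.card_fin, nsmul_eq_mul]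


def unfold {a b c : ℕ} (T : Fin a → Fin b → Fin c → ℝ) : Matrix (Fin a) (Fin (b * c)) ℝ :=
  Matrix.of fun i p => T i (finProdFinEquiv.symm p).1 (finProdFinEquiv.symm p).2

lemma sum_sq_unfold {a b c : ℕ} (T : Fin a → Fin b → Fin c → ℝ) :
    ∑ i, ∑ j, ∑ k, (T i j k)^2 = frobSq (unfold T) := by
  unfold frobSq unfold
  refine Finset.sum_congr rfl fun i _ => ?_
  rw [← Equiv.sum_comp (finProdFinEquiv : Fin b × Fin c ≃ Fin (b * c))
    (fun p => (Matrix.of (fun i p => T i (finProdFinEquiv.symm p).1 (finProdFinEquiv.symm p).2) i p)^2)]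
  simp only [Matrix.of_apply, Equiv.symm_apply_apply]
  rw [Fintype.sum_prod_type]

lemma unfold_mul {a b c : ℕ} (A : Matrix (Fin a) (Fin a) ℝ) (T : Fin a → Fin b → Fin c → ℝ) :
    unfold (fun i j k => ∑ i', A i i' * T i' j k) = A * unfold T := by
  ext i p
  simp [unfold, Matrix.mul_apply]

lemma sum_rot {a b c : ℕ} (f : Fin a → Fin b → Fin c → ℝ) :
    ∑ i, ∑ j, ∑ k, f i j k = ∑ k, ∑ i, ∑ j, f i j k := by
  have h1 : ∀ i : Fin a, ∑ j, ∑ k, f i j k = ∑ k, ∑ j, f i j k := fun i => Finset.sum_comm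
  simp_rw [h1]
  exact Finset.sum_comm

lemma sum_swap12 {a b c : ℕ} (f : Fin a → Fin b → Fin c → ℝ) :
    ∑ i, ∑ j, ∑ k, f i j k = ∑ j, ∑ i, ∑ k, f i j k :=
  Finset.sum_comm

lemma sqrt_triple_add3 {a b c : ℕ} (f g h : Fin a → Fin b → Fin c → ℝ) :
    Real.sqrt (∑ i, ∑ j, ∑ k, (f i j k + g i j k + h i j k)^2) ≤
      Real.sqrt (∑ i, ∑ j, ∑ k, (f i j k)^2) + Real.sqrt (∑ i, ∑ j, ∑ k, (g i j k)^2)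
        + Real.sqrt (∑ i, ∑ j, ∑ k, (h i j k)^2) := by
  have conv : ∀ t : Fin a → Fin b → Fin c → ℝ,
      ∑ i, ∑ j, ∑ k, (t i j k)^2
        = ∑ x : Fin a × Fin b × Fin c, (t x.1 x.2.1 x.2.2)^2 := by
    intro t
    rw [Fintype.sum_prod_type]
    exact Finset.sum_congr rfl fun i _ => (Fintype.sum_prod_type (fun y : Fin b × Fin c => (t i y.1 y.2)^2)).symm
  rw [conv, conv, conv, conv]
  calc Real.sqrt (∑ x : Fin a × Fin b × Fin c,
        ((fun x : Fin a × Fin b × Fin c => f x.1 x.2.1 x.2.2 + g x.1 x.2.1 x.2.2) x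
          + h x.1 x.2.1 x.2.2)^2)
      ≤ Real.sqrt (∑ x : Fin a × Fin b × Fin c,
          (f x.1 x.2.1 x.2.2 + g x.1 x.2.1 x.2.2)^2)
        + Real.sqrt (∑ x : Fin a × Fin b × Fin c, (h x.1 x.2.1 x.2.2)^2) :=
        sqrt_sum_sq_add_le _ _
  _ ≤ (Real.sqrt (∑ x : Fin a × Fin b × Fin c, (f x.1 x.2.1 x.2.2)^2)
        + Real.sqrt (∑ x : Fin a × Fin b × Fin c, (g x.1 x.2.1 x.2.2)^2))
        + Real.sqrt (∑ x : Fin a × Fin b × Fin c, (h x.1 x.2.1 x.2.2)^2) := by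
        gcongr
        exact sqrt_sum_sq_add_le _ _


lemma sum_one_mul {n : ℕ} (v : Fin n → ℝ) (i : Fin n) :
    ∑ i', (1 : Matrix (Fin n) (Fin n) ℝ) i i' * v i' = v i := by
  simp [Matrix.one_apply, ite_mul, Finset.sum_ite_eq]

lemma sum_sub_one_mul {n : ℕ} (A : Matrix (Fin n) (Fin n) ℝ) (v : Fin n → ℝ) (i : Fin n) :
    ∑ i', (A - 1) i i' * v i' = (∑ i', A i i' * v i') - v i := by
  simp only [Matrix.sub_apply, sub_mul, Finset.sum_sub_distrib]
  rw [sum_one_mul]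

lemma sum_mul_swap {α β : Type*} [Fintype α] [Fintype β] (a : α → ℝ) (b : β → ℝ)
    (f : α → β → ℝ) :
    ∑ x, a x * ∑ y, b y * f x y = ∑ y, b y * ∑ x, a x * f x y := by
  simp_rw [Finset.mul_sum]
  rw [Finset.sum_comm]
  exact Finset.sum_congr rfl fun y _ => Finset.sum_congr rfl fun x _ => by ring

end L1Aux



open Matrix

/-- perturbed case of Lemma 1: if τ exceeds every smallest positive singular
value of the unfoldings, the multi-way projection equals W + H with ‖H‖_F ≤ (√R1+√R2+√R3)τ. -/
theorem lemma1_perturbed (R1 R2 R3 : ℕ) (τ σR1 σR2 σR3 : ℝ) (hτ0 : 0 ≤ τ)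
    (W : Fin R1 → Fin R2 → Fin R3 → ℝ)
    -- mode-n unfoldings
    (W1 : Matrix (Fin R1) (Fin (R2 * R3)) ℝ)
    (hW1 : ∀ i j k, W1 i (finProdFinEquiv (j, k)) = W i j k)
    (W2 : Matrix (Fin R2) (Fin (R1 * R3)) ℝ)
    (hW2 : ∀ i j k, W2 j (finProdFinEquiv (i, k)) = W i j k)
    (W3 : Matrix (Fin R3) (Fin (R1 * R2)) ℝ)
    (hW3 : ∀ i j k, W3 k (finProdFinEquiv (i, j)) = W i j k)
    -- SVDs of the unfoldings
    (U1 : Matrix (Fin R1) (Fin R1) ℝ) (V1 : Matrix (Fin (R2 * R3)) (Fin (R2 * R3)) ℝ)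
    (hU1 : U1ᵀ * U1 = 1) (hV1 : V1ᵀ * V1 = 1)
    (σ1 : ℕ → ℝ) (hσ1 : ∀ i, 0 ≤ σ1 i)
    (hsvd1 : W1 = U1 * Matrix.of (fun (i : Fin R1) (j : Fin (R2 * R3)) =>
      if (i : ℕ) = (j : ℕ) then σ1 (i : ℕ) else 0) * V1ᵀ)
    (U2 : Matrix (Fin R2) (Fin R2) ℝ) (V2 : Matrix (Fin (R1 * R3)) (Fin (R1 * R3)) ℝ)
    (hU2 : U2ᵀ * U2 = 1) (hV2 : V2ᵀ * V2 = 1)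
    (σ2 : ℕ → ℝ) (hσ2 : ∀ i, 0 ≤ σ2 i)
    (hsvd2 : W2 = U2 * Matrix.of (fun (i : Fin R2) (j : Fin (R1 * R3)) =>
      if (i : ℕ) = (j : ℕ) then σ2 (i : ℕ) else 0) * V2ᵀ)
    (U3 : Matrix (Fin R3) (Fin R3) ℝ) (V3 : Matrix (Fin (R1 * R2)) (Fin (R1 * R2)) ℝ)
    (hU3 : U3ᵀ * U3 = 1) (hV3 : V3ᵀ * V3 = 1)
    (σ3 : ℕ → ℝ) (hσ3 : ∀ i, 0 ≤ σ3 i)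
    (hsvd3 : W3 = U3 * Matrix.of (fun (i : Fin R3) (j : Fin (R1 * R2)) =>
      if (i : ℕ) = (j : ℕ) then σ3 (i : ℕ) else 0) * V3ᵀ)
    -- τ-truncated pseudo-inverses
    (P1 : Matrix (Fin (R2 * R3)) (Fin R1) ℝ)
    (hP1 : P1 = V1 * Matrix.of (fun (j : Fin (R2 * R3)) (i : Fin R1) =>
      if (j : ℕ) = (i : ℕ) ∧ τ < σ1 (i : ℕ) then (σ1 (i : ℕ))⁻¹ else 0) * U1ᵀ)
    (P2 : Matrix (Fin (R1 * R3)) (Fin R2) ℝ)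
    (hP2 : P2 = V2 * Matrix.of (fun (j : Fin (R1 * R3)) (i : Fin R2) =>
      if (j : ℕ) = (i : ℕ) ∧ τ < σ2 (i : ℕ) then (σ2 (i : ℕ))⁻¹ else 0) * U2ᵀ)
    (P3 : Matrix (Fin (R1 * R2)) (Fin R3) ℝ)
    (hP3 : P3 = V3 * Matrix.of (fun (j : Fin (R1 * R2)) (i : Fin R3) =>
      if (j : ℕ) = (i : ℕ) ∧ τ < σ3 (i : ℕ) then (σ3 (i : ℕ))⁻¹ else 0) * U3ᵀ)
    -- σRn: smallest positive singular values of the unfoldings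
    (hσR1 : ∀ i, 0 < σ1 i → σR1 ≤ σ1 i)
    (hσR2 : ∀ i, 0 < σ2 i → σR2 ≤ σ2 i)
    (hσR3 : ∀ i, 0 < σ3 i → σR3 ≤ σ3 i)
    (hσR1' : ∃ i : Fin R1, ∃ j : Fin (R2 * R3), (i : ℕ) = (j : ℕ) ∧ σ1 (i : ℕ) = σR1)
    (hσR2' : ∃ i : Fin R2, ∃ j : Fin (R1 * R3), (i : ℕ) = (j : ℕ) ∧ σ2 (i : ℕ) = σR2)
    (hσR3' : ∃ i : Fin R3, ∃ j : Fin (R1 * R2), (i : ℕ) = (j : ℕ) ∧ σ3 (i : ℕ) = σR3)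
    (hτ : max (max σR1 σR2) σR3 < τ) :
    ∃ H : Fin R1 → Fin R2 → Fin R3 → ℝ,
      (∀ i j k,
        (∑ i', (W1 * P1) i i' * ∑ j', (W2 * P2) j j' * ∑ k', (W3 * P3) k k' * W i' j' k')
          = W i j k + H i j k) ∧
      Real.sqrt (∑ i, ∑ j, ∑ k, (H i j k) ^ 2)
        ≤ (Real.sqrt R1 + Real.sqrt R2 + Real.sqrt R3) * τ := by
  classical
  obtain ⟨ne1, er1⟩ := L1Aux.key τ hτ0 U1 V1 hU1 hV1 σ1 hσ1 W1 hsvd1 P1 hP1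
  obtain ⟨ne2, er2⟩ := L1Aux.key τ hτ0 U2 V2 hU2 hV2 σ2 hσ2 W2 hsvd2 P2 hP2
  obtain ⟨ne3, er3⟩ := L1Aux.key τ hτ0 U3 V3 hU3 hV3 σ3 hσ3 W3 hsvd3 P3 hP3
  set Q1 := W1 * P1 with hQ1
  set Q2 := W2 * P2 with hQ2
  set Q3 := W3 * P3 with hQ3
  -- unfoldings of W agree with the given matrices
  have hunfW1 : L1Aux.unfold (fun i j k => W i j k) = W1 := by
    ext i p
    have h := hW1 i (finProdFinEquiv.symm p).1 (finProdFinEquiv.symm p).2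
    rw [L1Aux.unfold, Matrix.of_apply, ← h]
    congr 1
    exact finProdFinEquiv.apply_symm_apply p
  have hunfW2 : L1Aux.unfold (fun j i k => W i j k) = W2 := by
    ext j p
    have h := hW2 (finProdFinEquiv.symm p).1 j (finProdFinEquiv.symm p).2
    rw [L1Aux.unfold, Matrix.of_apply, ← h]
    congr 1
    exact finProdFinEquiv.apply_symm_apply p
  have hunfW3 : L1Aux.unfold (fun k i j => W i j k) = W3 := by
    ext k p
    have h := hW3 (finProdFinEquiv.symm p).1 (finProdFinEquiv.symm p).2 k
    rw [L1Aux.unfold, Matrix.of_apply, ← h]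
    congr 1
    exact finProdFinEquiv.apply_symm_apply p
  -- tensors
  set X3 : Fin R1 → Fin R2 → Fin R3 → ℝ := fun i j k => ∑ k', Q3 k k' * W i j k' with hX3
  set X23 : Fin R1 → Fin R2 → Fin R3 → ℝ := fun i j k => ∑ j', Q2 j j' * X3 i j' k with hX23
  set X123 : Fin R1 → Fin R2 → Fin R3 → ℝ := fun i j k => ∑ i', Q1 i i' * X23 i' j k with hX123
  set G1 : Fin R1 → Fin R2 → Fin R3 → ℝ := fun i j k => ∑ i', (Q1 - 1) i i' * W i' j k with hG1
  set G2 : Fin R1 → Fin R2 → Fin R3 → ℝ := fun i j k => ∑ j', (Q2 - 1) j j' * W i j' k with hG2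
  set Y : Fin R1 → Fin R2 → Fin R3 → ℝ := fun i j k => ∑ k', Q3 k k' * G1 i j k' with hY
  -- pointwise decompositions
  have hCpt : ∀ i j k, X3 i j k - W i j k = ∑ k', (Q3 - 1) k k' * W i j k' := by
    intro i j k
    rw [L1Aux.sum_sub_one_mul]
  have hBpt : ∀ i j k, X23 i j k - X3 i j k = ∑ k', Q3 k k' * G2 i j k' := by
    intro i j k
    have e1 : X23 i j k - X3 i j k = ∑ j', (Q2 - 1) j j' * X3 i j' k := by
      rw [L1Aux.sum_sub_one_mul]
    rw [e1]
    simp only [hX3, hG2]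
    exact L1Aux.sum_mul_swap (fun j' => (Q2 - 1) j j') (fun k' => Q3 k k')
      (fun j' k' => W i j' k')
  have hApt : ∀ i j k, X123 i j k - X23 i j k = ∑ j', Q2 j j' * Y i j' k := by
    intro i j k
    have e1 : X123 i j k - X23 i j k = ∑ i', (Q1 - 1) i i' * X23 i' j k := by
      rw [L1Aux.sum_sub_one_mul]
    rw [e1]
    simp only [hX23]
    rw [L1Aux.sum_mul_swap (fun i' => (Q1 - 1) i i') (fun j' => Q2 j j')
      (fun i' j' => X3 i' j' k)]
    refine Finset.sum_congr rfl fun j' _ => ?_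
    congr 1
    simp only [hX3, hY, hG1]
    exact L1Aux.sum_mul_swap (fun i' => (Q1 - 1) i i') (fun k' => Q3 k k')
      (fun i' k' => W i' j' k')
  -- the three error bounds
  have hfin : ∀ (R : ℕ) (S : ℝ), S ≤ (R : ℝ) * τ^2 → Real.sqrt S ≤ Real.sqrt R * τ := by
    intro R S h
    calc Real.sqrt S ≤ Real.sqrt ((R : ℝ) * τ^2) := Real.sqrt_le_sqrt h
    _ = Real.sqrt R * τ := by rw [Real.sqrt_mul (Nat.cast_nonneg _), Real.sqrt_sq hτ0]
  have hCsum : ∑ i, ∑ j, ∑ k, (X3 i j k - W i j k)^2 ≤ (R3 : ℝ) * τ^2 := by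
    rw [L1Aux.sum_rot (fun i j k => (X3 i j k - W i j k)^2),
      L1Aux.sum_sq_unfold (fun k i j => X3 i j k - W i j k)]
    have h2 : L1Aux.unfold (fun k i j => X3 i j k - W i j k) = Q3 * W3 - W3 := by
      have h3 : (fun (k : Fin R3) (i : Fin R1) (j : Fin R2) => X3 i j k - W i j k)
          = fun k i j => ∑ k', (Q3 - 1) k k' *
              (fun (k' : Fin R3) (i : Fin R1) (j : Fin R2) => W i j k') k' i j := by
        funext k i j
        exact hCpt i j k
      rw [h3, L1Aux.unfold_mul, hunfW3, Matrix.sub_mul, Matrix.one_mul]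
    rw [h2]
    exact er3
  have hBsum : ∑ i, ∑ j, ∑ k, (X23 i j k - X3 i j k)^2 ≤ (R2 : ℝ) * τ^2 := by
    have e0 : ∑ i, ∑ j, ∑ k, (X23 i j k - X3 i j k)^2
        = ∑ i, ∑ j, ∑ k, (∑ k', Q3 k k' * G2 i j k')^2 := by
      refine Finset.sum_congr rfl fun i _ => Finset.sum_congr rfl fun j _ =>
        Finset.sum_congr rfl fun k _ => by rw [hBpt]
    rw [e0, L1Aux.sum_rot (fun i j k => (∑ k', Q3 k k' * G2 i j k')^2),
      L1Aux.sum_sq_unfold (fun k i j => ∑ k', Q3 k k' * G2 i j k')]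
    have h2 : L1Aux.unfold (fun (k : Fin R3) (i : Fin R1) (j : Fin R2) =>
          ∑ k', Q3 k k' * G2 i j k')
        = Q3 * L1Aux.unfold (fun k i j => G2 i j k) := by
      have h3 : (fun (k : Fin R3) (i : Fin R1) (j : Fin R2) => ∑ k', Q3 k k' * G2 i j k')
          = fun k i j => ∑ k', Q3 k k' *
              (fun (k' : Fin R3) (i : Fin R1) (j : Fin R2) => G2 i j k') k' i j := rfl
      rw [h3, L1Aux.unfold_mul]
    rw [h2]
    calc L1Aux.frobSq (Q3 * L1Aux.unfold (fun k i j => G2 i j k))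
        ≤ L1Aux.frobSq (L1Aux.unfold (fun k i j => G2 i j k)) := ne3 _ _
    _ = ∑ i, ∑ j, ∑ k, (G2 i j k)^2 := by
        rw [← L1Aux.sum_sq_unfold (fun k i j => G2 i j k),
          ← L1Aux.sum_rot (fun i j k => (G2 i j k)^2)]
    _ = L1Aux.frobSq (L1Aux.unfold (fun j i k => G2 i j k)) := by
        rw [L1Aux.sum_swap12 (fun i j k => (G2 i j k)^2),
          L1Aux.sum_sq_unfold (fun j i k => G2 i j k)]
    _ = L1Aux.frobSq (Q2 * W2 - W2) := by
        congr 1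
        have h4 : (fun (j : Fin R2) (i : Fin R1) (k : Fin R3) => G2 i j k)
            = fun j i k => ∑ j', (Q2 - 1) j j' *
                (fun (j' : Fin R2) (i : Fin R1) (k : Fin R3) => W i j' k) j' i k := by
          funext j i k
          simp only [hG2]
        rw [h4, L1Aux.unfold_mul, hunfW2, Matrix.sub_mul, Matrix.one_mul]
    _ ≤ (R2 : ℝ) * τ^2 := er2
  have hAsum : ∑ i, ∑ j, ∑ k, (X123 i j k - X23 i j k)^2 ≤ (R1 : ℝ) * τ^2 := by
    have e0 : ∑ i, ∑ j, ∑ k, (X123 i j k - X23 i j k)^2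
        = ∑ i, ∑ j, ∑ k, (∑ j', Q2 j j' * Y i j' k)^2 := by
      refine Finset.sum_congr rfl fun i _ => Finset.sum_congr rfl fun j _ =>
        Finset.sum_congr rfl fun k _ => by rw [hApt]
    rw [e0, L1Aux.sum_swap12 (fun i j k => (∑ j', Q2 j j' * Y i j' k)^2),
      L1Aux.sum_sq_unfold (fun j i k => ∑ j', Q2 j j' * Y i j' k)]
    have h2 : L1Aux.unfold (fun (j : Fin R2) (i : Fin R1) (k : Fin R3) =>
          ∑ j', Q2 j j' * Y i j' k)
        = Q2 * L1Aux.unfold (fun j i k => Y i j k) := by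
      have h3 : (fun (j : Fin R2) (i : Fin R1) (k : Fin R3) => ∑ j', Q2 j j' * Y i j' k)
          = fun j i k => ∑ j', Q2 j j' *
              (fun (j' : Fin R2) (i : Fin R1) (k : Fin R3) => Y i j' k) j' i k := rfl
      rw [h3, L1Aux.unfold_mul]
    rw [h2]
    calc L1Aux.frobSq (Q2 * L1Aux.unfold (fun j i k => Y i j k))
        ≤ L1Aux.frobSq (L1Aux.unfold (fun j i k => Y i j k)) := ne2 _ _
    _ = ∑ i, ∑ j, ∑ k, (Y i j k)^2 := by
        rw [← L1Aux.sum_sq_unfold (fun j i k => Y i j k),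
          ← L1Aux.sum_swap12 (fun i j k => (Y i j k)^2)]
    _ = L1Aux.frobSq (L1Aux.unfold (fun k i j => Y i j k)) := by
        rw [L1Aux.sum_rot (fun i j k => (Y i j k)^2),
          L1Aux.sum_sq_unfold (fun k i j => Y i j k)]
    _ = L1Aux.frobSq (Q3 * L1Aux.unfold (fun k i j => G1 i j k)) := by
        congr 1
    _ ≤ L1Aux.frobSq (L1Aux.unfold (fun k i j => G1 i j k)) := ne3 _ _
    _ = ∑ i, ∑ j, ∑ k, (G1 i j k)^2 := by
        rw [← L1Aux.sum_sq_unfold (fun k i j => G1 i j k),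
          ← L1Aux.sum_rot (fun i j k => (G1 i j k)^2)]
    _ = L1Aux.frobSq (Q1 * W1 - W1) := by
        rw [L1Aux.sum_sq_unfold (fun i j k => G1 i j k)]
        congr 1
        have h4 : (fun (i : Fin R1) (j : Fin R2) (k : Fin R3) => G1 i j k)
            = fun i j k => ∑ i', (Q1 - 1) i i' *
                (fun (i' : Fin R1) (j : Fin R2) (k : Fin R3) => W i' j k) i' j k := by
          funext i j k
          simp only [hG1]
        rw [h4, L1Aux.unfold_mul, hunfW1, Matrix.sub_mul, Matrix.one_mul]
    _ ≤ (R1 : ℝ) * τ^2 := er1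
  refine ⟨fun i j k => X123 i j k - W i j k, ?_, ?_⟩
  · intro i j k
    simp only [hX123, hX23, hX3]
    ring
  · calc Real.sqrt (∑ i, ∑ j, ∑ k, (X123 i j k - W i j k)^2)
        = Real.sqrt (∑ i, ∑ j, ∑ k, ((X123 i j k - X23 i j k) + (X23 i j k - X3 i j k)
            + (X3 i j k - W i j k))^2) := by
          congr 1
          refine Finset.sum_congr rfl fun i _ => Finset.sum_congr rfl fun j _ =>
            Finset.sum_congr rfl fun k _ => by ring
    _ ≤ Real.sqrt (∑ i, ∑ j, ∑ k, (X123 i j k - X23 i j k)^2)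
          + Real.sqrt (∑ i, ∑ j, ∑ k, (X23 i j k - X3 i j k)^2)
          + Real.sqrt (∑ i, ∑ j, ∑ k, (X3 i j k - W i j k)^2) :=
        L1Aux.sqrt_triple_add3 _ _ _
    _ ≤ Real.sqrt R1 * τ + Real.sqrt R2 * τ + Real.sqrt R3 * τ :=
        add_le_add (add_le_add (hfin R1 _ hAsum) (hfin R2 _ hBsum)) (hfin R3 _ hCsum)
    _ = (Real.sqrt R1 + Real.sqrt R2 + Real.sqrt R3) * τ := by ring
end

section
/- Let X ∈ R^{I_1×I_2×I_3} have multilinear rank (R_1, R_2, I_3), i.e., X = G ×_1 A_1 ×_2 A_2 with full-rank core G ∈ R^{R_1×R_2×I_3}, and let Φ_1 ∈ R^{R_1×I_1}, Φ_2 ∈ R^{R_2×I_2} be such that Φ_1 A_1 and Φ_2 A_2 are invertible. Define W = X ×_1 Φ_1 ×_2 Φ_2, Z_1 = (X ×_2 Φ_2)_{(1)}, Z_2 = (X ×_1 Φ_1)_{(2)}. Then X = W ×_1 Z_1 W_{(1)}^† ×_2 Z_2 W_{(2)}^† ×_3 W_{(3)} W_{(3)}^†. -/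
open Matrix

open Kronecker

private lemma sum_swap4' {α β γ δ : Type*} [Fintype α] [Fintype β] [Fintype γ] [Fintype δ]
    (f : α → β → γ → δ → ℝ) :
    ∑ a, ∑ b, ∑ c, ∑ d, f a b c d = ∑ c, ∑ d, ∑ a, ∑ b, f a b c d :=
  calc ∑ a, ∑ b, ∑ c, ∑ d, f a b c d
      = ∑ a, ∑ c, ∑ b, ∑ d, f a b c d := Finset.sum_congr rfl fun _ _ => Finset.sum_comm
    _ = ∑ c, ∑ a, ∑ b, ∑ d, f a b c d := Finset.sum_comm
    _ = ∑ c, ∑ a, ∑ d, ∑ b, f a b c d :=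
        Finset.sum_congr rfl fun _ _ => Finset.sum_congr rfl fun _ _ => Finset.sum_comm
    _ = ∑ c, ∑ d, ∑ a, ∑ b, f a b c d := Finset.sum_congr rfl fun _ _ => Finset.sum_comm

private lemma sum_swap3' {α β γ : Type*} [Fintype α] [Fintype β] [Fintype γ]
    (f : α → β → γ → ℝ) :
    ∑ a, ∑ b, ∑ c, f a b c = ∑ b, ∑ c, ∑ a, f a b c :=
  calc ∑ a, ∑ b, ∑ c, f a b c
      = ∑ b, ∑ a, ∑ c, f a b c := Finset.sum_comm
    _ = ∑ b, ∑ c, ∑ a, f a b c := Finset.sum_congr rfl fun _ _ => Finset.sum_comm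

/-- A Penrose condition plus full row rank forces `A * P = 1`. -/
private lemma left_id_of_penrose {m n : Type*} [Fintype m] [Fintype n] [DecidableEq m]
    (A : Matrix m n ℝ) (P : Matrix n m ℝ) (hr : A.rank = Fintype.card m)
    (hP : A * P * A = A) : A * P = 1 := by
  have hsurj : Function.Surjective A.mulVecLin := by
    rw [← LinearMap.range_eq_top]
    apply Submodule.eq_top_of_finrank_eq
    rw [show (Module.finrank ℝ (LinearMap.range A.mulVecLin)) = A.rank from rfl, hr,
      Module.finrank_pi]
  ext i j
  obtain ⟨x, hx⟩ := hsurj (Pi.single j 1)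
  have hx' : A *ᵥ x = Pi.single j 1 := hx
  have h3 : (A * P) *ᵥ Pi.single j 1 = Pi.single j 1 := by
    rw [← hx', Matrix.mulVec_mulVec, hP]
  have h4 := congrFun h3 i
  simpa [Matrix.mulVec_single, Matrix.one_apply, Pi.single_apply] using h4

/-- the 3D special case with Φ₃ = I (same 2D sensing operator applied to all
frontal slices): X = W ×₁ Z₁W₍₁₎† ×₂ Z₂W₍₂₎† ×₃ W₍₃₎W₍₃₎†.  Pseudo-inverses are
characterized by the Penrose conditions. -/
theorem exact_recovery_3D_identity_mode3 (I1 I2 I3 R1 R2 : ℕ)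
    (X : Fin I1 → Fin I2 → Fin I3 → ℝ) (G : Fin R1 → Fin R2 → Fin I3 → ℝ)
    (A1 : Matrix (Fin I1) (Fin R1) ℝ) (A2 : Matrix (Fin I2) (Fin R2) ℝ)
    (hX : ∀ i j k, X i j k = ∑ r1, ∑ r2, A1 i r1 * A2 j r2 * G r1 r2 k)
    -- the core G is full-rank in every mode (multilinear rank (R1, R2, I3)):
    (hG1 : (Matrix.of fun (r1 : Fin R1) (p : Fin R2 × Fin I3) => G r1 p.1 p.2).rank = R1)
    (hG2 : (Matrix.of fun (r2 : Fin R2) (p : Fin R1 × Fin I3) => G p.1 r2 p.2).rank = R2)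
    (hG3 : (Matrix.of fun (k : Fin I3) (p : Fin R1 × Fin R2) => G p.1 p.2 k).rank = I3)
    (Φ1 : Matrix (Fin R1) (Fin I1) ℝ) (Φ2 : Matrix (Fin R2) (Fin I2) ℝ)
    (h1 : IsUnit (Φ1 * A1).det) (h2 : IsUnit (Φ2 * A2).det)
    (W : Fin R1 → Fin R2 → Fin I3 → ℝ)
    (hW : ∀ r1 r2 k, W r1 r2 k = ∑ i, ∑ j, Φ1 r1 i * Φ2 r2 j * X i j k)
    (Z1 : Matrix (Fin I1) (Fin R2 × Fin I3) ℝ)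
    (hZ1 : ∀ i p, Z1 i p = ∑ j, Φ2 p.1 j * X i j p.2)
    (Z2 : Matrix (Fin I2) (Fin R1 × Fin I3) ℝ)
    (hZ2 : ∀ j p, Z2 j p = ∑ i, Φ1 p.1 i * X i j p.2)
    (W1 : Matrix (Fin R1) (Fin R2 × Fin I3) ℝ) (hW1 : ∀ r p, W1 r p = W r p.1 p.2)
    (W2 : Matrix (Fin R2) (Fin R1 × Fin I3) ℝ) (hW2 : ∀ r p, W2 r p = W p.1 r p.2)
    (W3 : Matrix (Fin I3) (Fin R1 × Fin R2) ℝ) (hW3 : ∀ k p, W3 k p = W p.1 p.2 k)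
    (P1 : Matrix (Fin R2 × Fin I3) (Fin R1) ℝ)
    (hP11 : W1 * P1 * W1 = W1) (hP12 : P1 * W1 * P1 = P1)
    (hP13 : (W1 * P1)ᵀ = W1 * P1) (hP14 : (P1 * W1)ᵀ = P1 * W1)
    (P2 : Matrix (Fin R1 × Fin I3) (Fin R2) ℝ)
    (hP21 : W2 * P2 * W2 = W2) (hP22 : P2 * W2 * P2 = P2)
    (hP23 : (W2 * P2)ᵀ = W2 * P2) (hP24 : (P2 * W2)ᵀ = P2 * W2)
    (P3 : Matrix (Fin R1 × Fin R2) (Fin I3) ℝ)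
    (hP31 : W3 * P3 * W3 = W3) (hP32 : P3 * W3 * P3 = P3)
    (hP33 : (W3 * P3)ᵀ = W3 * P3) (hP34 : (P3 * W3)ᵀ = P3 * W3) :
    ∀ i j k, X i j k = ∑ r1, ∑ r2, ∑ k',
      (Z1 * P1) i r1 * (Z2 * P2) j r2 * (W3 * P3) k k' * W r1 r2 k' := by
  set B1 := Φ1 * A1 with hB1
  set B2 := Φ2 * A2 with hB2
  -- entries of W in terms of the core
  have hWB : ∀ r1 r2 k, W r1 r2 k = ∑ s1, ∑ s2, B1 r1 s1 * B2 r2 s2 * G s1 s2 k := by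
    intro r1 r2 k
    rw [hW]
    simp only [hX, Finset.mul_sum]
    rw [sum_swap4' (fun i j s1 s2 => Φ1 r1 i * Φ2 r2 j * (A1 i s1 * A2 j s2 * G s1 s2 k))]
    simp only [hB1, hB2, Matrix.mul_apply, Finset.sum_mul, Finset.mul_sum]
    refine Finset.sum_congr rfl fun s1 _ => Finset.sum_congr rfl fun s2 _ => ?_
    rw [Finset.sum_comm]
    exact Finset.sum_congr rfl fun j _ => Finset.sum_congr rfl fun i _ => by ring
  -- mode 1
  set M1 : Matrix (Fin R1) (Fin R2 × Fin I3) ℝ :=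
    Matrix.of (fun s1 p => ∑ s2, B2 p.1 s2 * G s1 s2 p.2) with hM1
  have hW1M : W1 = B1 * M1 := by
    ext r p
    rw [hW1, hWB]
    simp only [hM1, Matrix.mul_apply, Matrix.of_apply, Finset.mul_sum]
    exact Finset.sum_congr rfl fun s1 _ => Finset.sum_congr rfl fun s2 _ => by ring
  have hZ1M : Z1 = A1 * M1 := by
    ext i p
    rw [hZ1]
    simp only [hX, Finset.mul_sum]
    rw [sum_swap3' (fun j s1 s2 => Φ2 p.1 j * (A1 i s1 * A2 j s2 * G s1 s2 p.2))]
    simp only [hM1, hB2, Matrix.mul_apply, Matrix.of_apply, Finset.mul_sum, Finset.sum_mul]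
    refine Finset.sum_congr rfl fun s1 _ => Finset.sum_congr rfl fun s2 _ =>
      Finset.sum_congr rfl fun j _ => by ring
  have hM1K : M1 = (Matrix.of fun (r1 : Fin R1) (p : Fin R2 × Fin I3) => G r1 p.1 p.2) *
      (B2ᵀ ⊗ₖ (1 : Matrix (Fin I3) (Fin I3) ℝ)) := by
    ext s1 p
    simp only [hM1, Matrix.mul_apply, Matrix.of_apply, Matrix.kroneckerMap_apply,
      Matrix.transpose_apply, Fintype.sum_prod_type, Matrix.one_apply, mul_ite, mul_one,
      mul_zero, Finset.sum_ite_eq, Finset.sum_ite_eq', Finset.mem_univ, if_true]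
    exact Finset.sum_congr rfl fun s2 _ => by ring
  have hrank1 : W1.rank = Fintype.card (Fin R1) := by
    have hKdet : IsUnit ((B2ᵀ ⊗ₖ (1 : Matrix (Fin I3) (Fin I3) ℝ))).det := by
      rw [Matrix.det_kronecker, Matrix.det_transpose, Matrix.det_one, one_pow, mul_one]
      exact h2.pow _
    rw [hW1M, hM1K,
      Matrix.rank_mul_eq_right_of_isUnit_det B1 _ h1,
      Matrix.rank_mul_eq_left_of_isUnit_det _ _ hKdet, hG1, Fintype.card_fin]
  have hW1P1 : W1 * P1 = 1 := left_id_of_penrose W1 P1 hrank1 hP11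
  have e1 : Z1 * P1 * B1 = A1 := by
    have h := hW1P1
    rw [hW1M, Matrix.mul_assoc] at h
    have hinv : B1⁻¹ = M1 * P1 := Matrix.inv_eq_right_inv h
    calc Z1 * P1 * B1 = A1 * (M1 * P1) * B1 := by rw [hZ1M, Matrix.mul_assoc A1 M1 P1]
      _ = A1 * B1⁻¹ * B1 := by rw [hinv]
      _ = A1 := by rw [Matrix.mul_assoc, Matrix.nonsing_inv_mul B1 h1, Matrix.mul_one]
  -- mode 2
  set M2 : Matrix (Fin R2) (Fin R1 × Fin I3) ℝ :=
    Matrix.of (fun s2 p => ∑ s1, B1 p.1 s1 * G s1 s2 p.2) with hM2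
  have hW2M : W2 = B2 * M2 := by
    ext r p
    rw [hW2, hWB]
    simp only [hM2, Matrix.mul_apply, Matrix.of_apply, Finset.mul_sum]
    rw [Finset.sum_comm]
    exact Finset.sum_congr rfl fun s2 _ => Finset.sum_congr rfl fun s1 _ => by ring
  have hZ2M : Z2 = A2 * M2 := by
    ext j p
    rw [hZ2]
    simp only [hX, Finset.mul_sum]
    rw [sum_swap3' (fun i s1 s2 => Φ1 p.1 i * (A1 i s1 * A2 j s2 * G s1 s2 p.2))]
    rw [Finset.sum_comm]
    simp only [hM2, hB1, Matrix.mul_apply, Matrix.of_apply, Finset.mul_sum, Finset.sum_mul]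
    refine Finset.sum_congr rfl fun s2 _ => Finset.sum_congr rfl fun s1 _ =>
      Finset.sum_congr rfl fun i _ => by ring
  have hM2K : M2 = (Matrix.of fun (r2 : Fin R2) (p : Fin R1 × Fin I3) => G p.1 r2 p.2) *
      (B1ᵀ ⊗ₖ (1 : Matrix (Fin I3) (Fin I3) ℝ)) := by
    ext s2 p
    simp only [hM2, Matrix.mul_apply, Matrix.of_apply, Matrix.kroneckerMap_apply,
      Matrix.transpose_apply, Fintype.sum_prod_type, Matrix.one_apply, mul_ite, mul_one,
      mul_zero, Finset.sum_ite_eq, Finset.sum_ite_eq', Finset.mem_univ, if_true]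
    exact Finset.sum_congr rfl fun s1 _ => by ring
  have hrank2 : W2.rank = Fintype.card (Fin R2) := by
    have hKdet : IsUnit ((B1ᵀ ⊗ₖ (1 : Matrix (Fin I3) (Fin I3) ℝ))).det := by
      rw [Matrix.det_kronecker, Matrix.det_transpose, Matrix.det_one, one_pow, mul_one]
      exact h1.pow _
    rw [hW2M, hM2K,
      Matrix.rank_mul_eq_right_of_isUnit_det B2 _ h2,
      Matrix.rank_mul_eq_left_of_isUnit_det _ _ hKdet, hG2, Fintype.card_fin]
  have hW2P2 : W2 * P2 = 1 := left_id_of_penrose W2 P2 hrank2 hP21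
  have e2 : Z2 * P2 * B2 = A2 := by
    have h := hW2P2
    rw [hW2M, Matrix.mul_assoc] at h
    have hinv : B2⁻¹ = M2 * P2 := Matrix.inv_eq_right_inv h
    calc Z2 * P2 * B2 = A2 * (M2 * P2) * B2 := by rw [hZ2M, Matrix.mul_assoc A2 M2 P2]
      _ = A2 * B2⁻¹ * B2 := by rw [hinv]
      _ = A2 := by rw [Matrix.mul_assoc, Matrix.nonsing_inv_mul B2 h2, Matrix.mul_one]
  -- mode 3
  have hW3e : ∀ r1 r2 k, ∑ k', (W3 * P3) k k' * W r1 r2 k' = W r1 r2 k := by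
    intro r1 r2 k
    have h := congrFun (congrFun hP31 k) (r1, r2)
    rw [Matrix.mul_apply] at h
    simpa [hW3] using h
  -- assembly
  intro i j k
  have step3 : ∀ r1 r2, ∑ k', (Z1 * P1) i r1 * (Z2 * P2) j r2 * (W3 * P3) k k' * W r1 r2 k'
      = (Z1 * P1) i r1 * (Z2 * P2) j r2 * W r1 r2 k := by
    intro r1 r2
    rw [← hW3e r1 r2 k, Finset.mul_sum]
    exact Finset.sum_congr rfl fun k' _ => by ring
  rw [show (∑ r1, ∑ r2, ∑ k', (Z1 * P1) i r1 * (Z2 * P2) j r2 * (W3 * P3) k k' * W r1 r2 k')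
      = ∑ r1, ∑ r2, (Z1 * P1) i r1 * (Z2 * P2) j r2 * W r1 r2 k from
    Finset.sum_congr rfl fun r1 _ => Finset.sum_congr rfl fun r2 _ => step3 r1 r2]
  have hA1e : ∀ s1, A1 i s1 = ∑ r1, (Z1 * P1) i r1 * B1 r1 s1 := by
    intro s1
    conv_lhs => rw [← e1]
    rw [Matrix.mul_apply]
  have hA2e : ∀ s2, A2 j s2 = ∑ r2, (Z2 * P2) j r2 * B2 r2 s2 := by
    intro s2
    conv_lhs => rw [← e2]
    rw [Matrix.mul_apply]
  rw [hX]
  calc ∑ s1, ∑ s2, A1 i s1 * A2 j s2 * G s1 s2 k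
      = ∑ s1, ∑ s2, ∑ r1, ∑ r2,
          (Z1 * P1) i r1 * B1 r1 s1 * ((Z2 * P2) j r2 * B2 r2 s2) * G s1 s2 k := by
        refine Finset.sum_congr rfl fun s1 _ => Finset.sum_congr rfl fun s2 _ => ?_
        rw [hA1e, hA2e]
        simp only [Finset.sum_mul, Finset.mul_sum]
        rw [Finset.sum_comm]
    _ = ∑ r1, ∑ r2, ∑ s1, ∑ s2,
          (Z1 * P1) i r1 * B1 r1 s1 * ((Z2 * P2) j r2 * B2 r2 s2) * G s1 s2 k :=
        sum_swap4' _
    _ = ∑ r1, ∑ r2, (Z1 * P1) i r1 * (Z2 * P2) j r2 * W r1 r2 k := by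
        refine Finset.sum_congr rfl fun r1 _ => Finset.sum_congr rfl fun r2 _ => ?_
        rw [hWB, Finset.mul_sum]
        refine Finset.sum_congr rfl fun s1 _ => ?_
        rw [Finset.mul_sum]
        exact Finset.sum_congr rfl fun s2 _ => by ring
end

section
/- Let W ∈ R^{R_1×R_2×R_3}, let Ω = W ×_1 W_{(1)}^{*τ} ×_2 W_{(2)}^{*τ} ×_3 W_{(3)}^{*τ}, and let F_1 ∈ R^{I_1×R_1}, F_2 ∈ R^{I_2×R_2} be arbitrary matrices. Then the tensor B_4 = Ω ×_1 F_1 ×_2 F_2 ×_3 W_{(3)} satisfies ‖B_4‖_F ≤ ‖F_1‖_F ‖F_2‖_F / max(τ, σ_R), where σ_R is the minimum of the smallest positive singular values of W_{(1)} and W_{(2)}, assuming τ ≤ σ_max of each unfolding. -/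
open Matrix

namespace B4aux

/-- squared operator-norm bound -/
def OpB {m n : Type*} [Fintype m] [Fintype n] (M : Matrix m n ℝ) (C : ℝ) : Prop :=
  ∀ v : n → ℝ, ∑ i, (∑ j, M i j * v j) ^ 2 ≤ C * ∑ j, (v j) ^ 2

/-- pseudo-diagonal rectangular matrix -/
def pd (m n : ℕ) (d : ℕ → ℝ) : Matrix (Fin m) (Fin n) ℝ :=
  Matrix.of fun i j => if (i : ℕ) = (j : ℕ) then d (i : ℕ) else 0

lemma sum_ite_coe {n : ℕ} (k : ℕ) (f : Fin n → ℝ) :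
    (∑ j : Fin n, if k = (j : ℕ) then f j else 0) = if h : k < n then f ⟨k, h⟩ else 0 := by
  split_ifs with h
  · rw [Finset.sum_eq_single (⟨k, h⟩ : Fin n)]
    · simp
    · intro j _ hj
      rw [if_neg]
      intro hk
      exact hj (Fin.val_injective hk.symm)
    · simp
  · apply Finset.sum_eq_zero
    intro j _
    rw [if_neg]
    intro hk
    exact h (hk ▸ j.isLt)

lemma pd_mul {m k n : ℕ} (d1 d2 : ℕ → ℝ) :
    pd m k d1 * pd k n d2 = pd m n (fun r => if r < k then d1 r * d2 r else 0) := by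
  ext i j
  simp only [Matrix.mul_apply, pd, Matrix.of_apply]
  have h1 : ∀ l : Fin k,
      (if (i : ℕ) = (l : ℕ) then d1 (i : ℕ) else 0) *
        (if (l : ℕ) = (j : ℕ) then d2 (l : ℕ) else 0)
      = if (i : ℕ) = (l : ℕ) then
          (d1 (i : ℕ) * if (i : ℕ) = (j : ℕ) then d2 (i : ℕ) else 0) else 0 := by
    intro l
    by_cases h : (i : ℕ) = (l : ℕ)
    · simp [h]
    · simp [h]
  simp_rw [h1]
  rw [sum_ite_coe (i : ℕ) (fun _ => d1 (i : ℕ) * if (i : ℕ) = (j : ℕ) then d2 (i : ℕ) else 0)]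
  split_ifs <;> simp_all

lemma pd_transpose {n : ℕ} (d : ℕ → ℝ) : (pd n n d)ᵀ = pd n n d := by
  ext i j
  simp only [Matrix.transpose_apply, pd, Matrix.of_apply]
  by_cases h : (j : ℕ) = (i : ℕ)
  · rw [if_pos h, if_pos h.symm, h]
  · rw [if_neg h, if_neg fun hh => h hh.symm]

lemma opB_pd {m n : ℕ} {d : ℕ → ℝ} {C : ℝ} (hd : ∀ r, (d r) ^ 2 ≤ C) :
    OpB (pd m n d) C := by
  intro v
  have hC : 0 ≤ C := le_trans (sq_nonneg (d 0)) (hd 0)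
  have hrow : ∀ i : Fin m, (∑ j, pd m n d i j * v j)
      = ∑ j : Fin n, if (i : ℕ) = (j : ℕ) then d (i : ℕ) * v j else 0 := by
    intro i
    refine Finset.sum_congr rfl fun j _ => ?_
    simp only [pd, Matrix.of_apply, ite_mul, zero_mul]
  calc ∑ i, (∑ j, pd m n d i j * v j) ^ 2
      = ∑ i : Fin m, (if h : (i : ℕ) < n then d (i : ℕ) * v ⟨(i : ℕ), h⟩ else 0) ^ 2 := by
        refine Finset.sum_congr rfl fun i _ => ?_
        rw [hrow i, sum_ite_coe (i : ℕ) (fun j => d (i : ℕ) * v j)]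
    _ ≤ ∑ i : Fin m, (if h : (i : ℕ) < n then C * (v ⟨(i : ℕ), h⟩) ^ 2 else 0) := by
        refine Finset.sum_le_sum fun i _ => ?_
        split_ifs with h
        · rw [mul_pow]
          exact mul_le_mul_of_nonneg_right (hd _) (sq_nonneg _)
        · simp
    _ = C * ∑ i : Fin m, (if h : (i : ℕ) < n then (v ⟨(i : ℕ), h⟩) ^ 2 else 0) := by
        rw [Finset.mul_sum]
        refine Finset.sum_congr rfl fun i _ => ?_
        split_ifs <;> simp
    _ ≤ C * ∑ j, (v j) ^ 2 := by
        refine mul_le_mul_of_nonneg_left ?_ hC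
        have e : ∀ i : Fin m, (if h : (i : ℕ) < n then (v ⟨(i : ℕ), h⟩) ^ 2 else 0)
            = ∑ j : Fin n, if (i : ℕ) = (j : ℕ) then (v j) ^ 2 else 0 := fun i =>
          (sum_ite_coe (i : ℕ) (fun j => (v j) ^ 2)).symm
        simp_rw [e]
        rw [Finset.sum_comm]
        refine Finset.sum_le_sum fun j _ => ?_
        have e2 : ∀ i : Fin m, (if (i : ℕ) = (j : ℕ) then (v j) ^ 2 else 0)
            = (if (j : ℕ) = (i : ℕ) then (v j) ^ 2 else 0) := fun i => by
          simp only [eq_comm]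
        simp_rw [e2, sum_ite_coe]
        split_ifs
        · exact le_refl _
        · positivity

lemma sq_sum_eq_dot {m : Type*} [Fintype m] (x : m → ℝ) :
    ∑ i, (x i) ^ 2 = x ⬝ᵥ x := by
  simp [dotProduct, sq]

lemma orth_norm {m : Type*} [Fintype m] [DecidableEq m] {Q : Matrix m m ℝ}
    (hQ : Qᵀ * Q = 1) (y : m → ℝ) : ∑ i, ((Q *ᵥ y) i) ^ 2 = ∑ i, (y i) ^ 2 := by
  rw [sq_sum_eq_dot, sq_sum_eq_dot]
  calc (Q *ᵥ y) ⬝ᵥ (Q *ᵥ y) = ((Q *ᵥ y) ᵥ* Q) ⬝ᵥ y := Matrix.dotProduct_mulVec _ _ _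
    _ = (Qᵀ *ᵥ (Q *ᵥ y)) ⬝ᵥ y := by rw [Matrix.mulVec_transpose]
    _ = ((Qᵀ * Q) *ᵥ y) ⬝ᵥ y := by rw [Matrix.mulVec_mulVec]
    _ = y ⬝ᵥ y := by rw [hQ, Matrix.one_mulVec]

lemma opB_sum_eq {m n : Type*} [Fintype m] [Fintype n] (M : Matrix m n ℝ) (v : n → ℝ) :
    ∑ i, (∑ j, M i j * v j) ^ 2 = ∑ i, ((M *ᵥ v) i) ^ 2 := by
  refine Finset.sum_congr rfl fun i _ => ?_
  simp [Matrix.mulVec, dotProduct]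

lemma opB_conj {m n : Type*} [Fintype m] [Fintype n] [DecidableEq m] [DecidableEq n]
    {Q1 : Matrix m m ℝ} {Q2 : Matrix n n ℝ} {M : Matrix m n ℝ} {C : ℝ}
    (hQ1 : Q1ᵀ * Q1 = 1) (hQ2 : Q2ᵀ * Q2 = 1) (h : OpB M C) :
    OpB (Q1 * M * Q2ᵀ) C := by
  intro v
  rw [opB_sum_eq]
  have e2 : (Q1 * M * Q2ᵀ) *ᵥ v = Q1 *ᵥ (M *ᵥ (Q2ᵀ *ᵥ v)) := by
    rw [Matrix.mulVec_mulVec, Matrix.mulVec_mulVec]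
  rw [e2, orth_norm hQ1]
  have e3 : ∑ i, ((M *ᵥ (Q2ᵀ *ᵥ v)) i) ^ 2 ≤ C * ∑ j, ((Q2ᵀ *ᵥ v) j) ^ 2 := by
    have := h (Q2ᵀ *ᵥ v)
    rwa [opB_sum_eq] at this
  refine e3.trans (le_of_eq ?_)
  congr 1
  exact orth_norm (by rw [Matrix.transpose_transpose]; exact mul_eq_one_comm.mp hQ2) v

lemma opB_frob {m n : Type*} [Fintype m] [Fintype n] (F : Matrix m n ℝ) :
    OpB F (∑ i, ∑ j, (F i j) ^ 2) := by
  intro v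
  calc ∑ i, (∑ j, F i j * v j) ^ 2
      ≤ ∑ i, ((∑ j, (F i j) ^ 2) * ∑ j, (v j) ^ 2) := by
        refine Finset.sum_le_sum fun i _ => ?_
        exact Finset.sum_mul_sq_le_sq_mul_sq _ _ _
    _ = (∑ i, ∑ j, (F i j) ^ 2) * ∑ j, (v j) ^ 2 := by rw [Finset.sum_mul]

lemma opB_mul {m n k : Type*} [Fintype m] [Fintype n] [Fintype k] {M : Matrix m n ℝ}
    {N : Matrix n k ℝ} {C D : ℝ} (hC : 0 ≤ C) (hM : OpB M C) (hN : OpB N D) :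
    OpB (M * N) (C * D) := by
  intro v
  have h1 : ∀ i, (∑ j, (M * N) i j * v j) = ∑ l, M i l * (∑ j, N l j * v j) := by
    intro i
    simp_rw [Matrix.mul_apply, Finset.sum_mul, Finset.mul_sum]
    rw [Finset.sum_comm]
    exact Finset.sum_congr rfl fun l _ => Finset.sum_congr rfl fun j _ => by ring
  simp_rw [h1]
  calc ∑ i, (∑ l, M i l * (∑ j, N l j * v j)) ^ 2
      ≤ C * ∑ l, (∑ j, N l j * v j) ^ 2 := hM _
    _ ≤ C * (D * ∑ j, (v j) ^ 2) := mul_le_mul_of_nonneg_left (hN v) hC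
    _ = C * D * ∑ j, (v j) ^ 2 := by ring

lemma opB_mono {m n : Type*} [Fintype m] [Fintype n] {M : Matrix m n ℝ} {C C' : ℝ}
    (h : OpB M C) (hle : C ≤ C') : OpB M C' := fun v =>
  (h v).trans (mul_le_mul_of_nonneg_right hle (by positivity))

lemma of_eq_pd {m n : ℕ} (σ : ℕ → ℝ) (τ : ℝ) :
    (Matrix.of fun (j : Fin m) (i : Fin n) =>
      if (j : ℕ) = (i : ℕ) ∧ τ < σ (i : ℕ) then (σ (i : ℕ))⁻¹ else 0)
    = pd m n (fun r => if τ < σ r then (σ r)⁻¹ else 0) := by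
  ext j i
  simp only [pd, Matrix.of_apply]
  by_cases h : (j : ℕ) = (i : ℕ)
  · simp [h]
  · simp [h]

lemma swap_mul {α β : Type*} [Fintype α] [Fintype β] (u : α → ℝ) (v : β → ℝ)
    (G : α → β → ℝ) :
    ∑ c, u c * (∑ r, v r * G c r) = ∑ r, v r * (∑ c, u c * G c r) := by
  simp_rw [Finset.mul_sum]
  rw [Finset.sum_comm]
  exact Finset.sum_congr rfl fun r _ => Finset.sum_congr rfl fun c _ => by ring

lemma contract {α β : Type*} [Fintype α] [Fintype β] (x : α → ℝ) (p : α → β → ℝ)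
    (g : β → ℝ) :
    ∑ a, x a * (∑ r, p a r * g r) = ∑ r, (∑ a, x a * p a r) * g r := by
  simp_rw [Finset.mul_sum, Finset.sum_mul]
  rw [Finset.sum_comm]
  exact Finset.sum_congr rfl fun r _ => Finset.sum_congr rfl fun a _ => by ring

lemma sum_rev3 {α β γ : Type*} [Fintype α] [Fintype β] [Fintype γ] (f : α → β → γ → ℝ) :
    ∑ a, ∑ b, ∑ c, f a b c = ∑ c, ∑ b, ∑ a, f a b c := by
  rw [Finset.sum_comm]
  rw [show (∑ b : β, ∑ a : α, ∑ c : γ, f a b c) = ∑ b : β, ∑ c : γ, ∑ a : α, f a b c from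
    Finset.sum_congr rfl fun b _ => Finset.sum_comm]
  rw [Finset.sum_comm]

/-- the big sum interchange (Tucker / unfolding identity) -/
lemma tucker {ι1 ι2 ι3 κ1 κ2 κ3 : Type*} [Fintype ι1] [Fintype ι2] [Fintype ι3]
    [Fintype κ1] [Fintype κ2] [Fintype κ3]
    (x : ι1 → ℝ) (y : ι2 → ℝ) (z : ι3 → ℝ)
    (p : ι1 → κ1 → ℝ) (q : ι2 → κ2 → ℝ) (s : ι3 → κ3 → ℝ)
    (w : κ1 → κ2 → κ3 → ℝ) :
    (∑ a, ∑ b, ∑ c, x a * y b * z c *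
        (∑ r1, ∑ r2, ∑ r3, p a r1 * q b r2 * s c r3 * w r1 r2 r3))
    = ∑ r3, (∑ c, z c * s c r3) *
        (∑ r2, (∑ b, y b * q b r2) * (∑ r1, (∑ a, x a * p a r1) * w r1 r2 r3)) := by
  have hΩint : ∀ a b c, (∑ r1, ∑ r2, ∑ r3, p a r1 * q b r2 * s c r3 * w r1 r2 r3)
      = ∑ r3, s c r3 * (∑ r2, q b r2 * (∑ r1, p a r1 * w r1 r2 r3)) := by
    intro a b c
    rw [show (∑ r1, ∑ r2, ∑ r3, p a r1 * q b r2 * s c r3 * w r1 r2 r3)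
        = ∑ r1, ∑ r2, ∑ r3, s c r3 * (q b r2 * (p a r1 * w r1 r2 r3)) from
      Finset.sum_congr rfl fun _ _ => Finset.sum_congr rfl fun _ _ =>
        Finset.sum_congr rfl fun _ _ => by ring]
    rw [sum_rev3]
    simp_rw [← Finset.mul_sum]
  calc (∑ a, ∑ b, ∑ c, x a * y b * z c *
        (∑ r1, ∑ r2, ∑ r3, p a r1 * q b r2 * s c r3 * w r1 r2 r3))
      = ∑ a, ∑ b, ∑ c, x a * (y b * (z c *
          (∑ r3, s c r3 * (∑ r2, q b r2 * (∑ r1, p a r1 * w r1 r2 r3))))) := by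
        refine Finset.sum_congr rfl fun a _ => Finset.sum_congr rfl fun b _ =>
          Finset.sum_congr rfl fun c _ => ?_
        rw [hΩint a b c]
        ring
    _ = ∑ a, x a * (∑ b, y b * (∑ c, z c *
          (∑ r3, s c r3 * (∑ r2, q b r2 * (∑ r1, p a r1 * w r1 r2 r3))))) := by
        simp_rw [Finset.mul_sum]
    _ = ∑ a, x a * (∑ b, y b * (∑ r3, (∑ c, z c * s c r3) *
          (∑ r2, q b r2 * (∑ r1, p a r1 * w r1 r2 r3)))) := by
        refine Finset.sum_congr rfl fun a _ => ?_
        congr 1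
        refine Finset.sum_congr rfl fun b _ => ?_
        congr 1
        exact contract z s _
    _ = ∑ a, x a * (∑ r3, (∑ c, z c * s c r3) *
          (∑ b, y b * (∑ r2, q b r2 * (∑ r1, p a r1 * w r1 r2 r3)))) := by
        refine Finset.sum_congr rfl fun a _ => ?_
        congr 1
        exact swap_mul y (fun r3 => ∑ c, z c * s c r3) _
    _ = ∑ r3, (∑ c, z c * s c r3) * (∑ a, x a *
          (∑ b, y b * (∑ r2, q b r2 * (∑ r1, p a r1 * w r1 r2 r3)))) :=
        swap_mul x (fun r3 => ∑ c, z c * s c r3) _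
    _ = ∑ r3, (∑ c, z c * s c r3) * (∑ a, x a *
          (∑ r2, (∑ b, y b * q b r2) * (∑ r1, p a r1 * w r1 r2 r3))) := by
        refine Finset.sum_congr rfl fun r3 _ => ?_
        congr 1
        refine Finset.sum_congr rfl fun a _ => ?_
        congr 1
        exact contract y q _
    _ = ∑ r3, (∑ c, z c * s c r3) * (∑ r2, (∑ b, y b * q b r2) *
          (∑ a, x a * (∑ r1, p a r1 * w r1 r2 r3))) := by
        refine Finset.sum_congr rfl fun r3 _ => ?_
        congr 1
        exact swap_mul x (fun r2 => ∑ b, y b * q b r2) _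
    _ = ∑ r3, (∑ c, z c * s c r3) * (∑ r2, (∑ b, y b * q b r2) *
          (∑ r1, (∑ a, x a * p a r1) * w r1 r2 r3)) := by
        refine Finset.sum_congr rfl fun r3 _ => ?_
        congr 1
        refine Finset.sum_congr rfl fun r2 _ => ?_
        congr 1
        exact contract x p _

end B4aux

/-- bound on the quadratic error term B₄ = Ω ×₁ F₁ ×₂ F₂ ×₃ W₍₃₎ with
Ω = W ×₁ W₍₁₎^{*τ} ×₂ W₍₂₎^{*τ} ×₃ W₍₃₎^{*τ}: ‖B₄‖_F ≤ ‖F₁‖_F‖F₂‖_F / max(τ, σR). -/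
theorem B4_bound (R1 R2 R3 I1 I2 : ℕ) (τ σR1 σR2 σR : ℝ) (hτ0 : 0 ≤ τ)
    (hσR1pos : 0 < σR1) (hσR2pos : 0 < σR2) (hσR : σR = min σR1 σR2)
    (W : Fin R1 → Fin R2 → Fin R3 → ℝ)
    -- mode-n unfoldings
    (W1 : Matrix (Fin R1) (Fin (R2 * R3)) ℝ)
    (hW1 : ∀ i j k, W1 i (finProdFinEquiv (j, k)) = W i j k)
    (W2 : Matrix (Fin R2) (Fin (R1 * R3)) ℝ)
    (hW2 : ∀ i j k, W2 j (finProdFinEquiv (i, k)) = W i j k)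
    (W3 : Matrix (Fin R3) (Fin (R1 * R2)) ℝ)
    (hW3 : ∀ i j k, W3 k (finProdFinEquiv (i, j)) = W i j k)
    -- SVDs of the unfoldings
    (U1 : Matrix (Fin R1) (Fin R1) ℝ) (V1 : Matrix (Fin (R2 * R3)) (Fin (R2 * R3)) ℝ)
    (hU1 : U1ᵀ * U1 = 1) (hV1 : V1ᵀ * V1 = 1)
    (σ1 : ℕ → ℝ) (hσ1 : ∀ i, 0 ≤ σ1 i)
    (hsvd1 : W1 = U1 * Matrix.of (fun (i : Fin R1) (j : Fin (R2 * R3)) =>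
      if (i : ℕ) = (j : ℕ) then σ1 (i : ℕ) else 0) * V1ᵀ)
    (U2 : Matrix (Fin R2) (Fin R2) ℝ) (V2 : Matrix (Fin (R1 * R3)) (Fin (R1 * R3)) ℝ)
    (hU2 : U2ᵀ * U2 = 1) (hV2 : V2ᵀ * V2 = 1)
    (σ2 : ℕ → ℝ) (hσ2 : ∀ i, 0 ≤ σ2 i)
    (hsvd2 : W2 = U2 * Matrix.of (fun (i : Fin R2) (j : Fin (R1 * R3)) =>
      if (i : ℕ) = (j : ℕ) then σ2 (i : ℕ) else 0) * V2ᵀ)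
    (U3 : Matrix (Fin R3) (Fin R3) ℝ) (V3 : Matrix (Fin (R1 * R2)) (Fin (R1 * R2)) ℝ)
    (hU3 : U3ᵀ * U3 = 1) (hV3 : V3ᵀ * V3 = 1)
    (σ3 : ℕ → ℝ) (hσ3 : ∀ i, 0 ≤ σ3 i)
    (hsvd3 : W3 = U3 * Matrix.of (fun (i : Fin R3) (j : Fin (R1 * R2)) =>
      if (i : ℕ) = (j : ℕ) then σ3 (i : ℕ) else 0) * V3ᵀ)
    -- τ-truncated pseudo-inverses
    (P1 : Matrix (Fin (R2 * R3)) (Fin R1) ℝ)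
    (hP1 : P1 = V1 * Matrix.of (fun (j : Fin (R2 * R3)) (i : Fin R1) =>
      if (j : ℕ) = (i : ℕ) ∧ τ < σ1 (i : ℕ) then (σ1 (i : ℕ))⁻¹ else 0) * U1ᵀ)
    (P2 : Matrix (Fin (R1 * R3)) (Fin R2) ℝ)
    (hP2 : P2 = V2 * Matrix.of (fun (j : Fin (R1 * R3)) (i : Fin R2) =>
      if (j : ℕ) = (i : ℕ) ∧ τ < σ2 (i : ℕ) then (σ2 (i : ℕ))⁻¹ else 0) * U2ᵀ)
    (P3 : Matrix (Fin (R1 * R2)) (Fin R3) ℝ)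
    (hP3 : P3 = V3 * Matrix.of (fun (j : Fin (R1 * R2)) (i : Fin R3) =>
      if (j : ℕ) = (i : ℕ) ∧ τ < σ3 (i : ℕ) then (σ3 (i : ℕ))⁻¹ else 0) * U3ᵀ)
    -- σR1, σR2: smallest positive singular values of W₍₁₎ and W₍₂₎:
    (hσR1 : ∀ i, 0 < σ1 i → σR1 ≤ σ1 i)
    (hσR2 : ∀ i, 0 < σ2 i → σR2 ≤ σ2 i)
    -- τ does not exceed the largest singular value of each unfolding:
    (hτ1 : ∃ i : Fin R1, ∃ j : Fin (R2 * R3), (i : ℕ) = (j : ℕ) ∧ τ ≤ σ1 (i : ℕ))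
    (hτ2 : ∃ i : Fin R2, ∃ j : Fin (R1 * R3), (i : ℕ) = (j : ℕ) ∧ τ ≤ σ2 (i : ℕ))
    (hτ3 : ∃ i : Fin R3, ∃ j : Fin (R1 * R2), (i : ℕ) = (j : ℕ) ∧ τ ≤ σ3 (i : ℕ))
    (F1 : Matrix (Fin I1) (Fin (R2 * R3)) ℝ) (F2 : Matrix (Fin I2) (Fin (R1 * R3)) ℝ)
    -- Ω = W ×₁ W₍₁₎^{*τ} ×₂ W₍₂₎^{*τ} ×₃ W₍₃₎^{*τ}:
    (Ω : Fin (R2 * R3) → Fin (R1 * R3) → Fin (R1 * R2) → ℝ)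
    (hΩ : ∀ a b c, Ω a b c = ∑ r1, ∑ r2, ∑ r3, P1 a r1 * P2 b r2 * P3 c r3 * W r1 r2 r3)
    -- B₄ = Ω ×₁ F₁ ×₂ F₂ ×₃ W₍₃₎:
    (B4 : Fin I1 → Fin I2 → Fin R3 → ℝ)
    (hB4 : ∀ i j k, B4 i j k = ∑ a, ∑ b, ∑ c, F1 i a * F2 j b * W3 k c * Ω a b c) :
    Real.sqrt (∑ i, ∑ j, ∑ k, (B4 i j k) ^ 2)
      ≤ Real.sqrt (∑ i, ∑ a, (F1 i a) ^ 2) * Real.sqrt (∑ j, ∑ b, (F2 j b) ^ 2)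
        / max τ σR := by
  classical
  open B4aux in
  have hm2 : (0:ℝ) < max τ σR2 := lt_max_of_lt_right hσR2pos
  have hmax : (0:ℝ) < max τ σR := lt_max_of_lt_right (hσR ▸ lt_min hσR1pos hσR2pos)
  have hP1pd : P1 = V1 * B4aux.pd (R2*R3) R1 (fun r => if τ < σ1 r then (σ1 r)⁻¹ else 0) * U1ᵀ := by
    rw [hP1, B4aux.of_eq_pd]
  have hP2pd : P2 = V2 * B4aux.pd (R1*R3) R2 (fun r => if τ < σ2 r then (σ2 r)⁻¹ else 0) * U2ᵀ := by
    rw [hP2, B4aux.of_eq_pd]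
  have hP3pd : P3 = V3 * B4aux.pd (R1*R2) R3 (fun r => if τ < σ3 r then (σ3 r)⁻¹ else 0) * U3ᵀ := by
    rw [hP3, B4aux.of_eq_pd]
  have hsvd1pd : W1 = U1 * B4aux.pd R1 (R2*R3) σ1 * V1ᵀ := hsvd1
  have hsvd3pd : W3 = U3 * B4aux.pd R3 (R1*R2) σ3 * V3ᵀ := hsvd3
  -- operator bound for W₃ P₃
  have hA3eq : W3 * P3 = U3 * (B4aux.pd R3 (R1*R2) σ3 *
      B4aux.pd (R1*R2) R3 (fun r => if τ < σ3 r then (σ3 r)⁻¹ else 0)) * U3ᵀ := by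
    rw [hsvd3pd, hP3pd]
    simp only [Matrix.mul_assoc]
    rw [← Matrix.mul_assoc V3ᵀ V3, hV3, Matrix.one_mul]
  have hopA3 : B4aux.OpB (W3 * P3) 1 := by
    rw [hA3eq, B4aux.pd_mul]
    refine B4aux.opB_conj hU3 hU3 (B4aux.opB_pd ?_)
    intro r
    split_ifs with h1 h2
    · rw [mul_inv_cancel₀ (ne_of_gt (lt_of_le_of_lt hτ0 h2))]; norm_num
    · norm_num
    · norm_num
  -- operator bound for P₂ and F₂ P₂
  have hopP2 : B4aux.OpB P2 (((max τ σR2)⁻¹)^2) := by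
    rw [hP2pd]
    refine B4aux.opB_conj hV2 hU2 (B4aux.opB_pd ?_)
    intro r
    split_ifs with h
    · have hpos : 0 < σ2 r := lt_of_le_of_lt hτ0 h
      have hle : max τ σR2 ≤ σ2 r := max_le h.le (hσR2 r hpos)
      have hinv : (σ2 r)⁻¹ ≤ (max τ σR2)⁻¹ := inv_anti₀ hm2 hle
      exact pow_le_pow_left₀ (inv_nonneg.mpr hpos.le) hinv 2
    · simpa using (by positivity : (0:ℝ) ≤ ((max τ σR2)⁻¹)^2)
  have hopA2 : B4aux.OpB (F2 * P2) ((∑ j, ∑ b, (F2 j b)^2) * ((max τ σR2)⁻¹)^2) :=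
    B4aux.opB_mul (by positivity) (B4aux.opB_frob F2) hopP2
  -- operator bound for (P₁ W₁)ᵀ
  have hPieq : P1 * W1 = V1 * B4aux.pd (R2*R3) (R2*R3)
      (fun r => if r < R1 then (if τ < σ1 r then (σ1 r)⁻¹ else 0) * σ1 r else 0) * V1ᵀ := by
    rw [hP1pd, hsvd1pd]
    simp only [Matrix.mul_assoc]
    rw [← Matrix.mul_assoc U1ᵀ U1, hU1, Matrix.one_mul,
      ← Matrix.mul_assoc (B4aux.pd (R2*R3) R1 _) (B4aux.pd R1 (R2*R3) σ1) V1ᵀ, B4aux.pd_mul]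
  have hopPiT : B4aux.OpB (P1 * W1)ᵀ 1 := by
    have ht : (P1 * W1)ᵀ = V1 * B4aux.pd (R2*R3) (R2*R3)
        (fun r => if r < R1 then (if τ < σ1 r then (σ1 r)⁻¹ else 0) * σ1 r else 0) * V1ᵀ := by
      rw [hPieq]
      simp only [Matrix.transpose_mul, Matrix.transpose_transpose, B4aux.pd_transpose,
        Matrix.mul_assoc]
    rw [ht]
    refine B4aux.opB_conj hV1 hV1 (B4aux.opB_pd ?_)
    intro r
    split_ifs with h1 h2
    · rw [inv_mul_cancel₀ (ne_of_gt (lt_of_le_of_lt hτ0 h2))]; norm_num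
    · norm_num
    · norm_num
  -- structural identity
  have hB4' : ∀ i j k, B4 i j k = ∑ r3, (W3 * P3) k r3 *
      (∑ r2, (F2 * P2) j r2 * (∑ r1, (F1 * P1) i r1 * W r1 r2 r3)) := by
    intro i j k
    rw [hB4]
    calc (∑ a, ∑ b, ∑ c, F1 i a * F2 j b * W3 k c * Ω a b c)
        = ∑ a, ∑ b, ∑ c, F1 i a * F2 j b * W3 k c *
            (∑ r1, ∑ r2, ∑ r3, P1 a r1 * P2 b r2 * P3 c r3 * W r1 r2 r3) := by
          simp_rw [hΩ]
      _ = ∑ r3, (∑ c, W3 k c * P3 c r3) *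
            (∑ r2, (∑ b, F2 j b * P2 b r2) * (∑ r1, (∑ a, F1 i a * P1 a r1) * W r1 r2 r3)) :=
          B4aux.tucker (fun a => F1 i a) (fun b => F2 j b) (fun c => W3 k c)
            (fun a r1 => P1 a r1) (fun b r2 => P2 b r2) (fun c r3 => P3 c r3) W
      _ = ∑ r3, (W3 * P3) k r3 *
            (∑ r2, (F2 * P2) j r2 * (∑ r1, (F1 * P1) i r1 * W r1 r2 r3)) := by
          simp_rw [Matrix.mul_apply]
  -- S identity
  have hS : ∀ i r2 r3, (∑ r1, (F1 * P1) i r1 * W r1 r2 r3)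
      = (F1 * (P1 * W1)) i (finProdFinEquiv (r2, r3)) := by
    intro i r2 r3
    rw [← Matrix.mul_assoc, Matrix.mul_apply]
    exact Finset.sum_congr rfl fun r1 _ => by rw [hW1]
  -- main chain
  have key : (∑ i, ∑ j, ∑ k, (B4 i j k)^2)
      ≤ (∑ i, ∑ a, (F1 i a)^2) * (∑ j, ∑ b, (F2 j b)^2) * ((max τ σR2)⁻¹)^2 := by
    have step3 : (∑ i, ∑ j, ∑ k, (B4 i j k)^2)
        ≤ ∑ i, ∑ j, ∑ r3, (∑ r2, (F2 * P2) j r2 * (∑ r1, (F1 * P1) i r1 * W r1 r2 r3))^2 := by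
      refine Finset.sum_le_sum fun i _ => Finset.sum_le_sum fun j _ => ?_
      simp_rw [hB4']
      have h := hopA3 (fun r3 => ∑ r2, (F2 * P2) j r2 * (∑ r1, (F1 * P1) i r1 * W r1 r2 r3))
      rwa [one_mul] at h
    have step2 : (∑ i, ∑ j, ∑ r3, (∑ r2, (F2 * P2) j r2 * (∑ r1, (F1 * P1) i r1 * W r1 r2 r3))^2)
        ≤ ((∑ j, ∑ b, (F2 j b)^2) * ((max τ σR2)⁻¹)^2) *
            ∑ i, ∑ r2, ∑ r3, (∑ r1, (F1 * P1) i r1 * W r1 r2 r3)^2 := by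
      rw [Finset.mul_sum]
      refine Finset.sum_le_sum fun i _ => ?_
      rw [show (∑ j, ∑ r3, (∑ r2, (F2 * P2) j r2 * (∑ r1, (F1 * P1) i r1 * W r1 r2 r3))^2)
          = ∑ r3, ∑ j, (∑ r2, (F2 * P2) j r2 * (∑ r1, (F1 * P1) i r1 * W r1 r2 r3))^2 from
        Finset.sum_comm]
      rw [show (∑ r2, ∑ r3, (∑ r1, (F1 * P1) i r1 * W r1 r2 r3)^2)
          = ∑ r3, ∑ r2, (∑ r1, (F1 * P1) i r1 * W r1 r2 r3)^2 from Finset.sum_comm,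
        Finset.mul_sum]
      refine Finset.sum_le_sum fun r3 _ => ?_
      exact hopA2 (fun r2 => ∑ r1, (F1 * P1) i r1 * W r1 r2 r3)
    have step1 : (∑ i, ∑ r2, ∑ r3, (∑ r1, (F1 * P1) i r1 * W r1 r2 r3)^2)
        ≤ ∑ i, ∑ a, (F1 i a)^2 := by
      refine Finset.sum_le_sum fun i _ => ?_
      have e : (∑ r2, ∑ r3, (∑ r1, (F1 * P1) i r1 * W r1 r2 r3)^2)
          = ∑ a, ((F1 * (P1 * W1)) i a)^2 := by
        simp_rw [hS]
        rw [← Equiv.sum_comp finProdFinEquiv (fun a => ((F1 * (P1 * W1)) i a)^2),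
          Fintype.sum_prod_type]
      rw [e]
      have h2 := hopPiT (fun b => F1 i b)
      rw [one_mul] at h2
      refine le_trans (le_of_eq ?_) h2
      refine Finset.sum_congr rfl fun a _ => ?_
      congr 1
      rw [Matrix.mul_apply]
      exact Finset.sum_congr rfl fun b _ => by rw [Matrix.transpose_apply]; ring
    calc (∑ i, ∑ j, ∑ k, (B4 i j k)^2)
        ≤ _ := step3
      _ ≤ _ := step2
      _ ≤ ((∑ j, ∑ b, (F2 j b)^2) * ((max τ σR2)⁻¹)^2) * (∑ i, ∑ a, (F1 i a)^2) :=
          mul_le_mul_of_nonneg_left step1 (by positivity)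
      _ = (∑ i, ∑ a, (F1 i a)^2) * (∑ j, ∑ b, (F2 j b)^2) * ((max τ σR2)⁻¹)^2 := by ring
  -- conclude
  have hX0 : (0:ℝ) ≤ ∑ i, ∑ a, (F1 i a)^2 := by positivity
  have hY0 : (0:ℝ) ≤ ∑ j, ∑ b, (F2 j b)^2 := by positivity
  refine (Real.sqrt_le_sqrt key).trans ?_
  rw [Real.sqrt_mul (mul_nonneg hX0 hY0), Real.sqrt_mul hX0,
    Real.sqrt_sq (inv_nonneg.mpr hm2.le), div_eq_mul_inv]
  refine mul_le_mul_of_nonneg_left ?_ (by positivity)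
  exact inv_anti₀ hmax (max_le_max le_rfl (hσR ▸ min_le_right _ _))
end
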